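/- Let C ⊂ ℝ²₊ be the cone generated by two vectors l₁, l₂ ∈ ℝ²₊ with det(l₁, l₂) = ±1, and let Δ(α) = {λ ∈ ℝ²₊ : λ₁ + λ₂ ≤ α}. Then the Lebesgue measure of Δ(α) ∩ C equals α²/(2‖l₁‖₁‖l₂‖₁), where ‖l‖₁ is the sum of the coordinates of l. -/

import Mathlib

open MeasureTheory Set

lemma triangle_vol (s₁ s₂ : ℝ) (hs₁ : 0 < s₁) (hs₂ : 0 < s₂) (α : ℝ) (hα : 0 ≤ α) :
    volume {q : ℝ × ℝ | 0 ≤ q.1 ∧ 0 ≤ q.2 ∧ q.1 * s₁ + q.2 * s₂ ≤ α} =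
      ENNReal.ofReal (α ^ 2 / (2 * s₁ * s₂)) := by
  have hS : MeasurableSet {q : ℝ × ℝ | 0 ≤ q.1 ∧ 0 ≤ q.2 ∧ q.1 * s₁ + q.2 * s₂ ≤ α} := by
    apply MeasurableSet.inter
    · exact measurableSet_le measurable_const measurable_fst
    apply MeasurableSet.inter
    · exact measurableSet_le measurable_const measurable_snd
    · exact measurableSet_le ((measurable_fst.mul_const _).add (measurable_snd.mul_const _)) measurable_const
  rw [Measure.volume_eq_prod, Measure.prod_apply hS]
  have key : (fun x => volume (Prod.mk x ⁻¹' {q : ℝ × ℝ | 0 ≤ q.1 ∧ 0 ≤ q.2 ∧ q.1 * s₁ + q.2 * s₂ ≤ α}))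
      = Set.indicator (Icc 0 (α / s₁)) (fun x => ENNReal.ofReal ((α - x * s₁) / s₂)) := by
    funext x
    have hpre : Prod.mk x ⁻¹' {q : ℝ × ℝ | 0 ≤ q.1 ∧ 0 ≤ q.2 ∧ q.1 * s₁ + q.2 * s₂ ≤ α}
        = {y : ℝ | 0 ≤ x ∧ 0 ≤ y ∧ y ≤ (α - x * s₁) / s₂} := by
      ext y
      simp only [mem_preimage, mem_setOf_eq, le_div_iff₀ hs₂]
      constructor
      · rintro ⟨hx, hy, h⟩; exact ⟨hx, hy, by linarith⟩
      · rintro ⟨hx, hy, h⟩; exact ⟨hx, hy, by linarith⟩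
    rw [hpre]
    by_cases hx0 : 0 ≤ x
    · have : {y : ℝ | 0 ≤ x ∧ 0 ≤ y ∧ y ≤ (α - x * s₁) / s₂} = Icc 0 ((α - x * s₁) / s₂) := by
        ext y; simp [hx0, Icc, and_comm]
      rw [this, Real.volume_Icc]
      by_cases hx1 : x ≤ α / s₁
      · rw [Set.indicator_of_mem (mem_Icc.mpr ⟨hx0, hx1⟩)]
        norm_num
      · rw [Set.indicator_of_notMem (by simp [hx0, hx1])]
        have : (α - x * s₁) / s₂ ≤ 0 := by
          apply div_nonpos_of_nonpos_of_nonneg _ hs₂.le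
          rw [not_le, div_lt_iff₀ hs₁] at hx1
          linarith
        simp [ENNReal.ofReal_eq_zero.2 (by linarith)]
    · have : {y : ℝ | 0 ≤ x ∧ 0 ≤ y ∧ y ≤ (α - x * s₁) / s₂} = ∅ := by
        ext y; simp [hx0]
      rw [this, Set.indicator_of_notMem (by simp [hx0]), measure_empty]
  rw [key]
  simp only [lintegral_indicator measurableSet_Icc]
  have hcont : Continuous (fun x : ℝ => (α - x * s₁) / s₂) := by fun_prop
  have hint : IntegrableOn (fun x : ℝ => (α - x * s₁) / s₂) (Icc 0 (α / s₁)) :=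
    hcont.integrableOn_Icc
  rw [← ofReal_integral_eq_lintegral_ofReal hint]
  · congr 1
    have h0 : (0:ℝ) ≤ α / s₁ := div_nonneg hα hs₁.le
    rw [integral_Icc_eq_integral_Ioc, ← intervalIntegral.integral_of_le h0]
    have : ∫ x in (0:ℝ)..(α / s₁), (α - x * s₁) / s₂
        = (∫ x in (0:ℝ)..(α / s₁), (α - x * s₁)) / s₂ := intervalIntegral.integral_div _ _
    rw [this, intervalIntegral.integral_sub intervalIntegrable_const
      (IntervalIntegrable.mul_const intervalIntegral.intervalIntegrable_id _),
      intervalIntegral.integral_const, intervalIntegral.integral_mul_const, integral_id]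
    field_simp
    ring_nf
    rw [mul_comm s₁, mul_assoc (α ^ 2), mul_inv_cancel₀ hs₁.ne']
    ring
  · filter_upwards [ae_restrict_mem measurableSet_Icc] with x hx
    exact div_nonneg (by nlinarith [hx.1, (le_div_iff₀ hs₁).1 hx.2]) hs₂.le

/-- If `C` is the cone generated by nonnegative vectors `l₁, l₂` with
`det(l₁,l₂) = ±1`, then the Lebesgue measure of
`{λ ∈ ℝ²₊ : λ₁ + λ₂ ≤ α} ∩ C` equals `α² / (2‖l₁‖₁‖l₂‖₁)`. -/
theorem measure_triangle_inter_cone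
    (l₁ l₂ : Fin 2 → ℝ)
    (h₁ : 0 ≤ l₁ 0) (h₂ : 0 ≤ l₁ 1) (h₃ : 0 ≤ l₂ 0) (h₄ : 0 ≤ l₂ 1)
    (hdet : l₁ 0 * l₂ 1 - l₁ 1 * l₂ 0 = 1 ∨ l₁ 0 * l₂ 1 - l₁ 1 * l₂ 0 = -1)
    (α : ℝ) (hα : 0 ≤ α) :
    volume ({v : Fin 2 → ℝ | 0 ≤ v 0 ∧ 0 ≤ v 1 ∧ v 0 + v 1 ≤ α} ∩
        {v | ∃ a b : ℝ, 0 ≤ a ∧ 0 ≤ b ∧ v = a • l₁ + b • l₂}) =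
      ENNReal.ofReal (α ^ 2 / (2 * (l₁ 0 + l₁ 1) * (l₂ 0 + l₂ 1))) := by
  set s₁ := l₁ 0 + l₁ 1 with hs₁def
  set s₂ := l₂ 0 + l₂ 1 with hs₂def
  have hd : l₁ 0 * l₂ 1 - l₁ 1 * l₂ 0 ≠ 0 := by rcases hdet with h | h <;> rw [h] <;> norm_num
  have hs₁ : 0 < s₁ := by
    rcases lt_or_eq_of_le (add_nonneg h₁ h₂) with h | h
    · exact h
    · exfalso; apply hd
      have e1 : l₁ 0 = 0 := by linarith
      have e2 : l₁ 1 = 0 := by linarith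
      rw [e1, e2]; ring
  have hs₂ : 0 < s₂ := by
    rcases lt_or_eq_of_le (add_nonneg h₃ h₄) with h | h
    · exact h
    · exfalso; apply hd
      have e1 : l₂ 0 = 0 := by linarith
      have e2 : l₂ 1 = 0 := by linarith
      rw [e1, e2]; ring
  set M : Matrix (Fin 2) (Fin 2) ℝ := !![l₁ 0, l₂ 0; l₁ 1, l₂ 1] with hM
  set φ : (Fin 2 → ℝ) →ₗ[ℝ] (Fin 2 → ℝ) := Matrix.toLin' M with hφ
  have hφapp : ∀ p : Fin 2 → ℝ, φ p = p 0 • l₁ + p 1 • l₂ := by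
    intro p
    funext i
    fin_cases i <;>
      simp [hφ, hM, Matrix.toLin'_apply, Matrix.mulVec, dotProduct,
        Fin.sum_univ_two] <;> ring
  set T : Set (Fin 2 → ℝ) := {p | 0 ≤ p 0 ∧ 0 ≤ p 1 ∧ p 0 * s₁ + p 1 * s₂ ≤ α} with hT
  have himg : ({v : Fin 2 → ℝ | 0 ≤ v 0 ∧ 0 ≤ v 1 ∧ v 0 + v 1 ≤ α} ∩
      {v | ∃ a b : ℝ, 0 ≤ a ∧ 0 ≤ b ∧ v = a • l₁ + b • l₂}) = φ '' T := by
    ext v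
    constructor
    · rintro ⟨⟨hv0, hv1, hvs⟩, a, b, ha, hb, rfl⟩
      refine ⟨![a, b], ⟨by simpa using ha, by simpa using hb, ?_⟩, ?_⟩
      · have h' : a * l₁ 0 + b * l₂ 0 + (a * l₁ 1 + b * l₂ 1) ≤ α := by
          simpa [Pi.add_apply, smul_eq_mul] using hvs
        show ![a, b] 0 * s₁ + ![a, b] 1 * s₂ ≤ α
        simp only [Matrix.cons_val_zero, Matrix.cons_val_one, Matrix.head_cons, hs₁def, hs₂def]
        linarith
      · rw [hφapp]; simp
    · rintro ⟨p, ⟨hp0, hp1, hps⟩, rfl⟩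
      have e0 : φ p 0 = p 0 * l₁ 0 + p 1 * l₂ 0 := by rw [hφapp]; simp
      have e1 : φ p 1 = p 0 * l₁ 1 + p 1 * l₂ 1 := by rw [hφapp]; simp
      refine ⟨⟨?_, ?_, ?_⟩, p 0, p 1, hp0, hp1, by rw [hφapp]⟩
      · rw [e0]; positivity
      · rw [e1]; positivity
      · rw [e0, e1]; rw [hs₁def, hs₂def] at hps; linarith
  rw [himg, Measure.addHaar_image_linearMap, hφ, LinearMap.det_toLin']
  have hdM : M.det = l₁ 0 * l₂ 1 - l₁ 1 * l₂ 0 := by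
    rw [hM]; simp [Matrix.det_fin_two]; ring
  have habs : |M.det| = 1 := by
    rw [hdM]; rcases hdet with h | h <;> rw [h] <;> norm_num
  rw [habs]
  have hTpre : T = (MeasurableEquiv.finTwoArrow : (Fin 2 → ℝ) ≃ᵐ ℝ × ℝ) ⁻¹'
      {q : ℝ × ℝ | 0 ≤ q.1 ∧ 0 ≤ q.2 ∧ q.1 * s₁ + q.2 * s₂ ≤ α} := by
    ext p; simp [hT, MeasurableEquiv.finTwoArrow]
  have hSmeas : MeasurableSet {q : ℝ × ℝ | 0 ≤ q.1 ∧ 0 ≤ q.2 ∧ q.1 * s₁ + q.2 * s₂ ≤ α} := by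
    apply MeasurableSet.inter
    · exact measurableSet_le measurable_const measurable_fst
    apply MeasurableSet.inter
    · exact measurableSet_le measurable_const measurable_snd
    · exact measurableSet_le ((measurable_fst.mul_const _).add (measurable_snd.mul_const _))
        measurable_const
  rw [hTpre, (volume_preserving_finTwoArrow ℝ).measure_preimage hSmeas.nullMeasurableSet,
    triangle_vol s₁ s₂ hs₁ hs₂ α hα]
  norm_num
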